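/- Let Σ be a d×d real positive semidefinite matrix, let t = Tr(Σ²), and let x be a centered Gaussian random vector on ℝ^d with covariance Σ. Then for all deterministic u, v ∈ ℝ^d: E[(⟨u,x⟩³ − 3t·⟨u,x⟩)·(⟨v,x⟩³ − 3t·⟨v,x⟩)] = 9·(uᵀΣv)·(uᵀΣu − t)·(vᵀΣv − t) + 6·(uᵀΣv)³. -/

import Mathlib

open Matrix MeasureTheory ProbabilityTheory

/-- The positive semidefinite square root of a positive semidefinite matrix
(the definition `Matrix.PosSemidef.sqrt` of the older Mathlib, since removed). -/
noncomputable def Matrix.PosSemidef.sqrt {n : Type*} [Fintype n] [DecidableEq n]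
    {A : Matrix n n ℝ} (hA : A.PosSemidef) : Matrix n n ℝ :=
  hA.1.eigenvectorUnitary.1 * diagonal ((↑) ∘ (√·) ∘ hA.1.eigenvalues) *
  (star hA.1.eigenvectorUnitary : Matrix n n ℝ)

/-- The standard Gaussian measure on `ℝ^d` (i.i.d. standard normal coordinates). -/
noncomputable def stdGaussianPi (d : ℕ) : Measure (Fin d → ℝ) :=
  Measure.pi fun _ : Fin d => gaussianReal 0 1

namespace GH3

open Real Filter

lemma sqrt_isHermitian' {d : ℕ} {S : Matrix (Fin d) (Fin d) ℝ} (hS : S.PosSemidef) :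
    hS.sqrt.IsHermitian := by
  rw [IsHermitian, Matrix.PosSemidef.sqrt, conjTranspose_mul, conjTranspose_mul,
    diagonal_conjTranspose, star_eq_conjTranspose, conjTranspose_conjTranspose, star_trivial,
    Matrix.mul_assoc]

lemma sqrt_mul_self' {d : ℕ} {S : Matrix (Fin d) (Fin d) ℝ} (hS : S.PosSemidef) :
    hS.sqrt * hS.sqrt = S := by
  have hU := Unitary.coe_star_mul_self hS.1.eigenvectorUnitary
  have hD : diagonal ((↑) ∘ (√·) ∘ hS.1.eigenvalues) * diagonal ((↑) ∘ (√·) ∘ hS.1.eigenvalues)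
      = diagonal ((↑) ∘ hS.1.eigenvalues : Fin d → ℝ) := by
    rw [diagonal_mul_diagonal]; congr 1; funext i
    simp [Real.mul_self_sqrt (hS.eigenvalues_nonneg i)]
  conv_rhs => rw [hS.1.spectral_theorem, Unitary.conjStarAlgAut_apply]
  set U : Matrix (Fin d) (Fin d) ℝ := hS.1.eigenvectorUnitary.1 with hUdef
  set D := diagonal ((↑) ∘ (√·) ∘ hS.1.eigenvalues : Fin d → ℝ) with hDdef
  have : hS.sqrt = U * D * star U := rfl
  rw [this]
  calc U * D * star U * (U * D * star U) = U * (D * (star U * U) * D) * star U := by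
        simp only [Matrix.mul_assoc]
    _ = _ := by rw [hU, Matrix.mul_one, hD]; rfl

/-- moments of the standard gaussian (up to 6) -/
def gm : ℕ → ℝ
  | 0 => 1 | 1 => 0 | 2 => 1 | 3 => 0 | 4 => 3 | 5 => 0 | 6 => 15 | _ => 0

lemma integrable_pow_mul_gauss (k : ℕ) :
    Integrable (fun x : ℝ => x ^ k * rexp (-(1/2) * x ^ 2)) := by
  have h := integrable_rpow_mul_exp_neg_mul_sq (b := 1/2) (by norm_num)
    (s := (k : ℝ)) (lt_of_lt_of_le neg_one_lt_zero (Nat.cast_nonneg k))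
  simpa [Real.rpow_natCast] using h

lemma J_odd (k : ℕ) (hk : Odd k) :
    ∫ x : ℝ, x ^ k * rexp (-(1/2) * x ^ 2) = 0 := by
  set f : ℝ → ℝ := fun x => x ^ k * rexp (-(1/2) * x ^ 2) with hf
  have h1 : ∫ x : ℝ, f (-x) = ∫ x : ℝ, f x := integral_neg_eq_self f volume
  have h2 : ∀ x : ℝ, f (-x) = -(f x) := by
    intro x
    rw [hf]
    simp only [hk.neg_pow, neg_sq]
    ring
  have h3 : ∫ x : ℝ, f (-x) = -∫ x : ℝ, f x := by
    simp_rw [h2]; exact integral_neg f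
  have := h1.symm.trans h3
  linarith

lemma tendsto_pow_mul_gauss (k : ℕ) :
    Tendsto (fun x : ℝ => x ^ k * rexp (-(1/2) * x ^ 2)) atTop (nhds 0) := by
  have h := rpow_mul_exp_neg_mul_sq_isLittleO_exp_neg (b := 1/2) (by norm_num) (k : ℝ)
  have h2 : Tendsto (fun x : ℝ => rexp (-(1/2) * x)) atTop (nhds 0) := by
    have : Tendsto (fun x : ℝ => -(1/2) * x) atTop atBot := by
      apply Tendsto.const_mul_atTop_of_neg (by norm_num) tendsto_id
    exact Real.tendsto_exp_atBot.comp this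
  have h3 := h.tendsto_zero_of_tendsto h2
  have : (fun x : ℝ => x ^ (k:ℝ) * rexp (-(1/2) * x ^ 2))
      = fun x : ℝ => x ^ k * rexp (-(1/2) * x ^ 2) := by
    funext x; rw [Real.rpow_natCast]
  rwa [this] at h3

lemma J_rec (k : ℕ) :
    ∫ x : ℝ, x ^ (k+2) * rexp (-(1/2) * x ^ 2)
      = (k+1 : ℝ) * ∫ x : ℝ, x ^ k * rexp (-(1/2) * x ^ 2) := by
  set E : ℝ → ℝ := fun x => rexp (-(1/2) * x ^ 2) with hE
  have hEpos : ∀ x, 0 < E x := fun x => Real.exp_pos _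
  have hEeven : ∀ x, E (-x) = E x := by intro x; rw [hE]; simp [neg_sq]
  have hderiv : ∀ x : ℝ, HasDerivAt (fun y => -(y ^ (k+1) * E y))
      (x ^ (k+2) * E x - (k+1 : ℝ) * (x ^ k * E x)) x := by
    intro x
    have h1 : HasDerivAt (fun y : ℝ => y ^ (k+1)) ((k+1 : ℝ) * x ^ k) x := by
      have := hasDerivAt_pow (k+1) x
      exact this.congr_deriv (by push_cast; simp)
    have h2 : HasDerivAt E (-x * E x) x := by
      have hinner : HasDerivAt (fun y : ℝ => -(1/2) * y ^ 2) (-x) x := by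
        have := (hasDerivAt_pow 2 x).const_mul (-(1/2) : ℝ)
        exact this.congr_deriv (by norm_num; ring)
      have := hinner.exp
      rw [hE]
      convert this using 1
      ring
    have := (h1.mul h2).neg
    exact this.congr_deriv (by ring)
  have hint : ∀ j : ℕ, Integrable (fun x : ℝ => x ^ j * E x) := integrable_pow_mul_gauss
  have key : ∀ T : ℝ,
      (∫ x in (-T)..T, x ^ (k+2) * E x) - (k+1:ℝ) * ∫ x in (-T)..T, x ^ k * E x
        = -(T ^ (k+1) * E T) - -((-T) ^ (k+1) * E (-T)) := by
    intro T
    rw [← intervalIntegral.integral_const_mul, ← intervalIntegral.integral_sub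
      ((hint (k+2)).intervalIntegrable) (((hint k).const_mul _).intervalIntegrable)]
    exact intervalIntegral.integral_eq_sub_of_hasDerivAt (fun x _ => hderiv x)
      (((hint (k+2)).sub ((hint k).const_mul _)).intervalIntegrable)
  have t1 : Tendsto (fun T : ℝ => (∫ x in (-T)..T, x ^ (k+2) * E x)
      - (k+1:ℝ) * ∫ x in (-T)..T, x ^ k * E x) atTop
      (nhds ((∫ x : ℝ, x ^ (k+2) * E x) - (k+1:ℝ) * ∫ x : ℝ, x ^ k * E x)) := by
    exact ((intervalIntegral_tendsto_integral (hint (k+2)) tendsto_neg_atTop_atBot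
      tendsto_id).sub ((intervalIntegral_tendsto_integral (hint k) tendsto_neg_atTop_atBot
      tendsto_id).const_mul _))
  have hb : Tendsto (fun T : ℝ => T ^ (k+1) * E T) atTop (nhds 0) := tendsto_pow_mul_gauss (k+1)
  have t2 : Tendsto (fun T : ℝ => -(T ^ (k+1) * E T) - -((-T) ^ (k+1) * E (-T))) atTop
      (nhds 0) := by
    have h1 : Tendsto (fun T : ℝ => -(T ^ (k+1) * E T)) atTop (nhds 0) := by
      simpa only [neg_zero] using hb.neg
    have h2 : Tendsto (fun T : ℝ => -((-T) ^ (k+1) * E (-T))) atTop (nhds 0) := by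
      apply squeeze_zero_norm' _ hb
      filter_upwards [eventually_ge_atTop (0:ℝ)] with T hT
      rw [norm_neg, norm_mul, hEeven, norm_pow, norm_neg, Real.norm_eq_abs,
        abs_of_nonneg hT, Real.norm_eq_abs, abs_of_nonneg (hEpos T).le]
    simpa only [sub_zero] using h1.sub h2
  have := tendsto_nhds_unique (by simpa only [key] using t1) t2
  linarith


lemma pdf_eq (x : ℝ) : gaussianPDFReal 0 1 x = (√(2*π))⁻¹ * rexp (-(1/2) * x ^ 2) := by
  simp only [gaussianPDFReal, NNReal.coe_one, mul_one, sub_zero]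
  congr 1
  ring

lemma integral_gaussianReal_std (f : ℝ → ℝ) :
    ∫ x, f x ∂(gaussianReal 0 1)
      = ∫ x, ((√(2*π))⁻¹ * rexp (-(1/2) * x ^ 2)) * f x := by
  rw [gaussianReal_of_var_ne_zero 0 one_ne_zero]
  have hmeas : Measurable (fun x => (gaussianPDFReal 0 1 x).toNNReal) :=
    (measurable_gaussianPDFReal 0 1).real_toNNReal
  have hpdf : gaussianPDF 0 1 = fun x => ((gaussianPDFReal 0 1 x).toNNReal : ENNReal) := rfl
  rw [hpdf, integral_withDensity_eq_integral_smul hmeas]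
  congr 1
  funext x
  rw [NNReal.smul_def, Real.coe_toNNReal _ (gaussianPDFReal_nonneg 0 1 x), pdf_eq]
  simp [smul_eq_mul]

lemma integrable_pow_gaussianReal (k : ℕ) :
    Integrable (fun x : ℝ => x ^ k) (gaussianReal 0 1) := by
  rw [gaussianReal_of_var_ne_zero 0 one_ne_zero,
    integrable_withDensity_iff (measurable_gaussianPDF 0 1)
      (ae_of_all _ fun x => ENNReal.ofReal_lt_top)]
  have : (fun x : ℝ => x ^ k * (gaussianPDF 0 1 x).toReal)
      = fun x : ℝ => (√(2*π))⁻¹ * (x ^ k * rexp (-(1/2) * x ^ 2)) := by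
    funext x
    rw [gaussianPDF, ENNReal.toReal_ofReal (gaussianPDFReal_nonneg 0 1 x), pdf_eq]
    ring
  rw [this]
  exact (integrable_pow_mul_gauss k).const_mul _

lemma sqrt_two_pi_pos : (0:ℝ) < √(2*π) := Real.sqrt_pos.mpr (by positivity)

lemma integral_pow_gaussianReal (k : ℕ) (hk : k ≤ 6) :
    ∫ x, x ^ k ∂(gaussianReal 0 1) = gm k := by
  have base : ∀ j : ℕ, ∫ x, x ^ j ∂(gaussianReal 0 1)
      = (√(2*π))⁻¹ * ∫ x : ℝ, x ^ j * rexp (-(1/2) * x ^ 2) := by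
    intro j
    rw [integral_gaussianReal_std (fun x => x ^ j)]
    rw [← integral_const_mul]
    congr 1; funext x; ring
  have J0 : ∫ x : ℝ, x ^ 0 * rexp (-(1/2) * x ^ 2) = √(2*π) := by
    have h := integral_gaussian (1/2 : ℝ)
    have h2 : √(π / (1/2)) = √(2*π) := by norm_num [mul_comm]
    rw [h2] at h
    rw [← h]
    congr 1; funext x; rw [pow_zero, one_mul]
  have J2 := (J_rec 0).trans (by rw [J0])
  have J4 := (J_rec 2).trans (by rw [J2])
  have J6 := (J_rec 4).trans (by rw [J4])
  have hc : (√(2*π))⁻¹ * √(2*π) = 1 := inv_mul_cancel₀ sqrt_two_pi_pos.ne'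
  interval_cases k
  · rw [base, J0, hc]; rfl
  · rw [base, J_odd 1 ⟨0, rfl⟩, mul_zero]; rfl
  · rw [base, J2]; show _ = (1:ℝ); push_cast; field_simp; norm_num
  · rw [base, J_odd 3 ⟨1, rfl⟩, mul_zero]; rfl
  · rw [base, J4]; show _ = (3:ℝ); push_cast; field_simp; ring
  · rw [base, J_odd 5 ⟨2, rfl⟩, mul_zero]; rfl
  · rw [base, J6]; show _ = (15:ℝ); push_cast; field_simp; ring


instance (d : ℕ) : IsProbabilityMeasure (stdGaussianPi d) := by
  unfold stdGaussianPi; infer_instance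

lemma L (d : ℕ) : ∀ (w : Fin d → ℝ) (n : ℕ), n ≤ 6 →
    Integrable (fun g => (w ⬝ᵥ g) ^ n) (stdGaussianPi d) ∧
    ∫ g, (w ⬝ᵥ g) ^ n ∂(stdGaussianPi d) = gm n * (w ⬝ᵥ w) ^ (n / 2) := by
  induction d with
  | zero =>
    intro w n hn
    have hdot : ∀ g : Fin 0 → ℝ, w ⬝ᵥ g = 0 := by
      intro g; simp [dotProduct]
    have hww : w ⬝ᵥ w = 0 := hdot w
    constructor
    · have : (fun g : Fin 0 → ℝ => (w ⬝ᵥ g) ^ n) = fun _ => (0:ℝ) ^ n := by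
        funext g; rw [hdot]
      rw [this]; exact integrable_const _
    · have : (fun g : Fin 0 → ℝ => (w ⬝ᵥ g) ^ n) = fun _ => (0:ℝ) ^ n := by
        funext g; rw [hdot]
      rw [this, integral_const, probReal_univ, hww]
      simp only [ENNReal.toReal_one, one_smul]
      interval_cases n <;> norm_num [gm]
  | succ d ih =>
    intro w n hn
    set μ := gaussianReal 0 1 with hμ
    set e := MeasurableEquiv.piFinSuccAbove (fun _ : Fin (d+1) => ℝ) 0 with he
    have mp : MeasurePreserving e (stdGaussianPi (d+1)) (μ.prod (stdGaussianPi d)) :=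
      measurePreserving_piFinSuccAbove (fun _ : Fin (d+1) => μ) 0
    have mps := MeasurePreserving.symm e mp
    set w' : Fin d → ℝ := fun j => w j.succ with hw'
    have hsymm : ∀ z : ℝ × (Fin d → ℝ), w ⬝ᵥ (e.symm z) = w 0 * z.1 + w' ⬝ᵥ z.2 := by
      rintro ⟨x, h⟩
      have : e.symm (x, h) = Fin.cons x h := by
        simp [he, MeasurableEquiv.piFinSuccAbove_symm_apply, Fin.insertNthEquiv,
          Fin.insertNth_zero]
      rw [this]
      simp [dotProduct, Fin.sum_univ_succ, hw']
    -- the expanded integrand on the product space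
    have hexp : ∀ z : ℝ × (Fin d → ℝ), (w ⬝ᵥ (e.symm z)) ^ n
        = ∑ j ∈ Finset.range (n+1),
            (w 0 ^ j * (n.choose j : ℝ)) * (z.1 ^ j * (w' ⬝ᵥ z.2) ^ (n - j)) := by
      intro z
      rw [hsymm z, add_pow]
      congr 1; funext j
      rw [mul_pow]; ring
    have hintj : ∀ j ∈ Finset.range (n+1), Integrable
        (fun z : ℝ × (Fin d → ℝ) =>
          (w 0 ^ j * (n.choose j : ℝ)) * (z.1 ^ j * (w' ⬝ᵥ z.2) ^ (n - j)))
        (μ.prod (stdGaussianPi d)) := by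
      intro j hj
      apply Integrable.const_mul
      exact Integrable.mul_prod (integrable_pow_gaussianReal j)
        ((ih w' (n - j) (le_trans (Nat.sub_le n j) hn)).1)
    constructor
    · rw [← mps.integrable_comp_emb e.symm.measurableEmbedding]
      have : ((fun g => (w ⬝ᵥ g) ^ n) ∘ e.symm)
          = fun z : ℝ × (Fin d → ℝ) => ∑ j ∈ Finset.range (n+1),
              (w 0 ^ j * (n.choose j : ℝ)) * (z.1 ^ j * (w' ⬝ᵥ z.2) ^ (n - j)) := by
        funext z; exact hexp z
      rw [this]
      exact integrable_finset_sum _ hintj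
    · rw [← mps.integral_comp' (fun g => (w ⬝ᵥ g) ^ n)]
      calc ∫ z, (w ⬝ᵥ e.symm z) ^ n ∂(μ.prod (stdGaussianPi d))
          = ∫ z, (∑ j ∈ Finset.range (n+1),
              (w 0 ^ j * (n.choose j : ℝ)) * (z.1 ^ j * (w' ⬝ᵥ z.2) ^ (n - j)))
              ∂(μ.prod (stdGaussianPi d)) := by
            congr 1; funext z; exact hexp z
        _ = ∑ j ∈ Finset.range (n+1), ∫ z, (w 0 ^ j * (n.choose j : ℝ))
              * (z.1 ^ j * (w' ⬝ᵥ z.2) ^ (n - j)) ∂(μ.prod (stdGaussianPi d)) :=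
            integral_finset_sum _ hintj
        _ = ∑ j ∈ Finset.range (n+1), (w 0 ^ j * (n.choose j : ℝ))
              * ((∫ x, x ^ j ∂μ) * ∫ h, (w' ⬝ᵥ h) ^ (n - j) ∂(stdGaussianPi d)) := by
            refine Finset.sum_congr rfl fun j hj => ?_
            rw [integral_const_mul, integral_prod_mul (f := fun x : ℝ => x ^ j) (g := fun h : Fin d → ℝ => (w' ⬝ᵥ h) ^ (n - j))]
        _ = ∑ j ∈ Finset.range (n+1), (w 0 ^ j * (n.choose j : ℝ))
              * (gm j * (gm (n - j) * (w' ⬝ᵥ w') ^ ((n - j) / 2))) := by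
            refine Finset.sum_congr rfl fun j hj => ?_
            rw [integral_pow_gaussianReal j (le_trans (Nat.lt_succ_iff.mp
              (Finset.mem_range.mp hj)) hn), (ih w' (n - j)
              (le_trans (Nat.sub_le n j) hn)).2]
        _ = gm n * (w ⬝ᵥ w) ^ (n / 2) := by
            have hww : w ⬝ᵥ w = w 0 * w 0 + w' ⬝ᵥ w' := by
              simp [dotProduct, Fin.sum_univ_succ, hw']
            rw [hww]
            interval_cases n <;>
              simp [Finset.sum_range_succ, gm, Nat.choose] <;> ring



lemma measurable_dot {d : ℕ} (p : Fin d → ℝ) :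
    Measurable fun g : Fin d → ℝ => p ⬝ᵥ g := by
  simp only [dotProduct]
  exact Finset.measurable_sum _ fun i _ => (measurable_pi_apply i).const_mul _

lemma mixInt {d : ℕ} (p q : Fin d → ℝ) (i j : ℕ) (h : i + j ≤ 6) (he : Even (i + j)) :
    Integrable (fun g => (p ⬝ᵥ g) ^ i * (q ⬝ᵥ g) ^ j) (stdGaussianPi d) := by
  apply Integrable.mono' (((L d p (i+j) h).1).add ((L d q (i+j) h).1))
  · exact (((measurable_dot p).pow_const i).mul
      ((measurable_dot q).pow_const j)).aestronglyMeasurable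
  · apply Eventually.of_forall
    intro g
    have h1 : ‖(p ⬝ᵥ g) ^ i * (q ⬝ᵥ g) ^ j‖ = |p ⬝ᵥ g| ^ i * |q ⬝ᵥ g| ^ j := by
      rw [Real.norm_eq_abs, abs_mul, abs_pow, abs_pow]
    rw [h1]
    have key : |p ⬝ᵥ g| ^ i * |q ⬝ᵥ g| ^ j
        ≤ |p ⬝ᵥ g| ^ (i+j) + |q ⬝ᵥ g| ^ (i+j) := by
      rcases le_total |p ⬝ᵥ g| |q ⬝ᵥ g| with hle | hle
      · calc |p ⬝ᵥ g| ^ i * |q ⬝ᵥ g| ^ j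
            ≤ |q ⬝ᵥ g| ^ i * |q ⬝ᵥ g| ^ j :=
              mul_le_mul_of_nonneg_right (pow_le_pow_left₀ (abs_nonneg _) hle i)
                (pow_nonneg (abs_nonneg _) j)
          _ = |q ⬝ᵥ g| ^ (i+j) := (pow_add _ i j).symm
          _ ≤ _ := le_add_of_nonneg_left (pow_nonneg (abs_nonneg _) _)
      · calc |p ⬝ᵥ g| ^ i * |q ⬝ᵥ g| ^ j
            ≤ |p ⬝ᵥ g| ^ i * |p ⬝ᵥ g| ^ j :=
              mul_le_mul_of_nonneg_left (pow_le_pow_left₀ (abs_nonneg _) hle j)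
                (pow_nonneg (abs_nonneg _) i)
          _ = |p ⬝ᵥ g| ^ (i+j) := (pow_add _ i j).symm
          _ ≤ _ := le_add_of_nonneg_right (pow_nonneg (abs_nonneg _) _)
    calc |p ⬝ᵥ g| ^ i * |q ⬝ᵥ g| ^ j ≤ |p ⬝ᵥ g| ^ (i+j) + |q ⬝ᵥ g| ^ (i+j) := key
      _ = (p ⬝ᵥ g) ^ (i+j) + (q ⬝ᵥ g) ^ (i+j) := by rw [he.pow_abs, he.pow_abs]

lemma moment_expand {d : ℕ} (p q : Fin d → ℝ) (n : ℕ) (hn : n ≤ 6) (he : Even n) (s : ℝ) :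
    ∑ m ∈ Finset.range (n+1), s ^ (n-m) * (n.choose m : ℝ)
        * ∫ g, (p ⬝ᵥ g) ^ m * (q ⬝ᵥ g) ^ (n-m) ∂(stdGaussianPi d)
      = gm n * (p ⬝ᵥ p + 2*s*(p ⬝ᵥ q) + s^2*(q ⬝ᵥ q)) ^ (n / 2) := by
  have hL := (L d (p + s • q) n hn).2
  have hq : (p + s • q) ⬝ᵥ (p + s • q)
      = p ⬝ᵥ p + 2*s*(p ⬝ᵥ q) + s^2*(q ⬝ᵥ q) := by
    simp only [add_dotProduct, dotProduct_add, smul_dotProduct, dotProduct_smul,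
      smul_eq_mul, dotProduct_comm q p]
    ring
  rw [hq] at hL
  rw [← hL]
  have hfun : (fun g => ((p + s • q) ⬝ᵥ g) ^ n)
      = fun g => ∑ m ∈ Finset.range (n+1),
          (s ^ (n-m) * (n.choose m : ℝ)) * ((p ⬝ᵥ g) ^ m * (q ⬝ᵥ g) ^ (n-m)) := by
    funext g
    have : (p + s • q) ⬝ᵥ g = p ⬝ᵥ g + s * (q ⬝ᵥ g) := by
      simp [add_dotProduct, smul_dotProduct]
    rw [this, add_pow]
    refine Finset.sum_congr rfl fun m hm => ?_
    rw [mul_pow]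
    ring
  have hint : ∀ m ∈ Finset.range (n+1), Integrable
      (fun g => (s ^ (n-m) * (n.choose m : ℝ)) * ((p ⬝ᵥ g) ^ m * (q ⬝ᵥ g) ^ (n-m)))
      (stdGaussianPi d) := by
    intro m hm
    have hmn : m + (n - m) = n :=
      Nat.add_sub_cancel' (Nat.lt_succ_iff.mp (Finset.mem_range.mp hm))
    exact (mixInt p q m (n-m) (by omega) (by rw [hmn]; exact he)).const_mul _
  rw [hfun, integral_finset_sum _ hint]
  refine Finset.sum_congr rfl fun m hm => ?_
  rw [integral_const_mul]


lemma mixed (d : ℕ) (p q : Fin d → ℝ) :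
    (∫ g, (p ⬝ᵥ g) * (q ⬝ᵥ g) ∂(stdGaussianPi d)) = p ⬝ᵥ q
  ∧ (∫ g, (p ⬝ᵥ g) ^ 3 * (q ⬝ᵥ g) ∂(stdGaussianPi d)) = 3 * (p ⬝ᵥ p) * (p ⬝ᵥ q)
  ∧ (∫ g, (p ⬝ᵥ g) * (q ⬝ᵥ g) ^ 3 ∂(stdGaussianPi d)) = 3 * (q ⬝ᵥ q) * (p ⬝ᵥ q)
  ∧ (∫ g, (p ⬝ᵥ g) ^ 3 * (q ⬝ᵥ g) ^ 3 ∂(stdGaussianPi d))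
      = 9 * (p ⬝ᵥ p) * (q ⬝ᵥ q) * (p ⬝ᵥ q) + 6 * (p ⬝ᵥ q) ^ 3 := by
  have H2 : ∀ s : ℝ, _ := fun s : ℝ => moment_expand p q 2 (by norm_num) ⟨1, rfl⟩ s
  have H4 : ∀ s : ℝ, _ := fun s : ℝ => moment_expand p q 4 (by norm_num) ⟨2, rfl⟩ s
  have H6 : ∀ s : ℝ, _ := fun s : ℝ => moment_expand p q 6 (by norm_num) ⟨3, rfl⟩ s
  simp only [Finset.sum_range_succ, Finset.sum_range_zero] at H2 H4 H6
  norm_num [gm, Nat.choose] at H2 H4 H6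
  have h11 : (∫ g, (p ⬝ᵥ g) * (q ⬝ᵥ g) ∂(stdGaussianPi d)) = p ⬝ᵥ q := by
    linear_combination (1/4) * H2 1 - (1/4) * H2 (-1)
  have h13 : (∫ g, (p ⬝ᵥ g) * (q ⬝ᵥ g) ^ 3 ∂(stdGaussianPi d))
      = 3 * (q ⬝ᵥ q) * (p ⬝ᵥ q) := by
    linear_combination (1/48) * H4 2 - (1/48) * H4 (-2) - (1/24) * H4 1 + (1/24) * H4 (-1)
  have h31 : (∫ g, (p ⬝ᵥ g) ^ 3 * (q ⬝ᵥ g) ∂(stdGaussianPi d))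
      = 3 * (p ⬝ᵥ p) * (p ⬝ᵥ q) := by
    linear_combination (1/8) * H4 1 - (1/8) * H4 (-1) - h13
  have h33 : (∫ g, (p ⬝ᵥ g) ^ 3 * (q ⬝ᵥ g) ^ 3 ∂(stdGaussianPi d))
      = 9 * (p ⬝ᵥ p) * (q ⬝ᵥ q) * (p ⬝ᵥ q) + 6 * (p ⬝ᵥ q) ^ 3 := by
    linear_combination (-13/960) * H6 1 + (13/960) * H6 (-1)
      + (1/120) * H6 2 - (1/120) * H6 (-2) - (1/960) * H6 3 + (1/960) * H6 (-3)
  exact ⟨h11, h31, h13, h33⟩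


end GH3

open GH3 in
/-- let `t = Tr(Σ²)` and let `x ~ N(0, Σ)` on `ℝ^d` (realized as
`x = Σ^{1/2} g` with `g` standard Gaussian).  For deterministic `u, v ∈ ℝ^d`,
`E[(⟨u,x⟩³ − 3t⟨u,x⟩)(⟨v,x⟩³ − 3t⟨v,x⟩)]
  = 9·(uᵀΣv)(uᵀΣu − t)(vᵀΣv − t) + 6·(uᵀΣv)³`. -/
theorem gaussian_hermite3_covariance {d : ℕ} (S : Matrix (Fin d) (Fin d) ℝ)
    (hS : S.PosSemidef) (u v : Fin d → ℝ) :
    ∫ g : Fin d → ℝ,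
        ((u ⬝ᵥ hS.sqrt.mulVec g) ^ 3 - 3 * (S * S).trace * (u ⬝ᵥ hS.sqrt.mulVec g))
          * ((v ⬝ᵥ hS.sqrt.mulVec g) ^ 3 - 3 * (S * S).trace * (v ⬝ᵥ hS.sqrt.mulVec g))
        ∂(stdGaussianPi d)
      = 9 * (u ⬝ᵥ S.mulVec v) * (u ⬝ᵥ S.mulVec u - (S * S).trace)
          * (v ⬝ᵥ S.mulVec v - (S * S).trace)
        + 6 * (u ⬝ᵥ S.mulVec v) ^ 3 := by
  set t : ℝ := (S * S).trace with ht
  set A := hS.sqrt with hAdef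
  have hAT : Aᵀ = A := by
    have h := sqrt_isHermitian' hS
    ext i j
    have := congrFun (congrFun h i) j
    simpa [Matrix.conjTranspose_apply] using this
  set p : Fin d → ℝ := u ᵥ* A with hp
  set q : Fin d → ℝ := v ᵥ* A with hq
  have key : ∀ x y : Fin d → ℝ, (x ᵥ* A) ⬝ᵥ (y ᵥ* A) = x ⬝ᵥ S *ᵥ y := by
    intro x y
    rw [← Matrix.mulVec_transpose A y, ← Matrix.dotProduct_mulVec,
      Matrix.mulVec_mulVec, hAT, sqrt_mul_self' hS]
  have hpp : p ⬝ᵥ p = u ⬝ᵥ S *ᵥ u := key u u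
  have hqq : q ⬝ᵥ q = v ⬝ᵥ S *ᵥ v := key v v
  have hpq : p ⬝ᵥ q = u ⬝ᵥ S *ᵥ v := key u v
  obtain ⟨h11, h31, h13, h33⟩ := mixed d p q
  have h33i : Integrable (fun g => (p ⬝ᵥ g) ^ 3 * (q ⬝ᵥ g) ^ 3) (stdGaussianPi d) :=
    mixInt p q 3 3 (by norm_num) ⟨3, rfl⟩
  have h31i : Integrable (fun g => (p ⬝ᵥ g) ^ 3 * (q ⬝ᵥ g)) (stdGaussianPi d) := by
    simpa using mixInt p q 3 1 (by norm_num) ⟨2, rfl⟩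
  have h13i : Integrable (fun g => (p ⬝ᵥ g) * (q ⬝ᵥ g) ^ 3) (stdGaussianPi d) := by
    simpa using mixInt p q 1 3 (by norm_num) ⟨2, rfl⟩
  have h11i : Integrable (fun g => (p ⬝ᵥ g) * (q ⬝ᵥ g)) (stdGaussianPi d) := by
    simpa using mixInt p q 1 1 (by norm_num) ⟨1, rfl⟩
  have hfun : (fun g : Fin d → ℝ =>
      ((u ⬝ᵥ A *ᵥ g) ^ 3 - 3 * t * (u ⬝ᵥ A *ᵥ g))
        * ((v ⬝ᵥ A *ᵥ g) ^ 3 - 3 * t * (v ⬝ᵥ A *ᵥ g)))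
      = fun g : Fin d → ℝ => ((p ⬝ᵥ g) ^ 3 * (q ⬝ᵥ g) ^ 3)
          - ((3*t) * ((p ⬝ᵥ g) ^ 3 * (q ⬝ᵥ g))
            + ((3*t) * ((p ⬝ᵥ g) * (q ⬝ᵥ g) ^ 3) - (9*t^2) * ((p ⬝ᵥ g) * (q ⬝ᵥ g)))) := by
    funext g
    rw [Matrix.dotProduct_mulVec u A g, Matrix.dotProduct_mulVec v A g, ← hp, ← hq]
    ring
  have hsub2 : Integrable (fun g : Fin d → ℝ =>
      (3*t) * ((p ⬝ᵥ g) * (q ⬝ᵥ g) ^ 3) - (9*t^2) * ((p ⬝ᵥ g) * (q ⬝ᵥ g)))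
      (stdGaussianPi d) := (h13i.const_mul _).sub (h11i.const_mul _)
  have hsub1 : Integrable (fun g : Fin d → ℝ =>
      (3*t) * ((p ⬝ᵥ g) ^ 3 * (q ⬝ᵥ g))
        + ((3*t) * ((p ⬝ᵥ g) * (q ⬝ᵥ g) ^ 3) - (9*t^2) * ((p ⬝ᵥ g) * (q ⬝ᵥ g))))
      (stdGaussianPi d) := (h31i.const_mul _).add hsub2
  rw [hfun, integral_sub h33i hsub1,
    integral_add (h31i.const_mul (3*t)) hsub2,
    integral_sub (h13i.const_mul (3*t)) (h11i.const_mul (9*t^2)),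
    integral_const_mul, integral_const_mul, integral_const_mul]
  rw [h33, h31, h13, h11, hpp, hqq, hpq]
  ring
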